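/- Let A ⊆ F_q with |A| ≈ q^{3/4} and |A+A| ≤ C|A|. Then |A·A| ≥ cq for an absolute constant c > 0. -/

import Mathlib

open Finset Pointwise
set_option maxHeartbeats 1000000


private lemma reindex_add (F : Type) [Field F] [Fintype F] (a : F) (f : F → ℝ) :
    ∑ c : F, f (a + c) = ∑ y : F, f y :=
  Fintype.sum_equiv (Equiv.addLeft a) _ _ (fun _ => rfl)

private lemma reindex_affine (F : Type) [Field F] [Fintype F] (y d : F) (hd : d ≠ 0) (f : F → ℝ) :
    ∑ m : F, f (y + m * d) = ∑ z : F, f z :=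
  Fintype.sum_equiv ((Equiv.mulRight₀ d hd).trans (Equiv.addLeft y)) _ _ (fun _ => rfl)

/-- Summing over all non-vertical lines: second moment bound. -/
private lemma line_sum_sq_le (F : Type) [Field F] [Fintype F] [DecidableEq F]
    (u : F × F → ℝ) (hu : ∑ p : F × F, u p = 0) :
    ∑ m : F, ∑ c : F, (∑ x : F, u (x, m * x + c)) ^ 2
      ≤ (Fintype.card F : ℝ) * ∑ p : F × F, (u p) ^ 2 := by
  set U : F → ℝ := fun x => ∑ y : F, u (x, y) with hU
  set V : F → ℝ := fun x => ∑ y : F, u (x, y) * u (x, y) with hV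
  have hUsum : ∑ x : F, U x = 0 := by
    rw [hU]
    rw [← Fintype.sum_prod_type (f := fun p : F × F => u p)]
    exact hu
  have hVsum : ∑ x : F, V x = ∑ p : F × F, (u p) ^ 2 := by
    rw [hV, Fintype.sum_prod_type (f := fun p : F × F => (u p) ^ 2)]
    simp [pow_two]
  have hdiag : ∀ x : F, ∑ m : F, ∑ c : F, u (x, m * x + c) * u (x, m * x + c)
      = (Fintype.card F : ℝ) * V x := by
    intro x
    have h1 : ∀ m : F, ∑ c : F, u (x, m * x + c) * u (x, m * x + c) = V x := by
      intro m
      exact reindex_add F (m * x) (fun t => u (x, t) * u (x, t))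
    simp [h1, Finset.sum_const, card_univ, nsmul_eq_mul]
  have hoff : ∀ x x' : F, x ≠ x' → ∑ m : F, ∑ c : F, u (x, m * x + c) * u (x', m * x' + c)
      = U x * U x' := by
    intro x x' hxx
    have hd : x' - x ≠ 0 := sub_ne_zero.mpr (Ne.symm hxx)
    have step1 : ∀ m : F, ∑ c : F, u (x, m * x + c) * u (x', m * x' + c)
        = ∑ t : F, u (x, t) * u (x', t + m * (x' - x)) := by
      intro m
      have h := reindex_add F (m * x) (fun t => u (x, t) * u (x', t + m * (x' - x)))
      rw [← h]
      apply Finset.sum_congr rfl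
      intro c _
      congr 2
      ring
    calc ∑ m : F, ∑ c : F, u (x, m * x + c) * u (x', m * x' + c)
        = ∑ m : F, ∑ t : F, u (x, t) * u (x', t + m * (x' - x)) :=
          Finset.sum_congr rfl (fun m _ => step1 m)
      _ = ∑ t : F, ∑ m : F, u (x, t) * u (x', t + m * (x' - x)) := Finset.sum_comm
      _ = ∑ t : F, u (x, t) * ∑ m : F, u (x', t + m * (x' - x)) :=
          Finset.sum_congr rfl (fun t _ => by rw [Finset.mul_sum])
      _ = ∑ t : F, u (x, t) * U x' := by
          refine Finset.sum_congr rfl (fun t _ => ?_)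
          rw [reindex_affine F t (x' - x) hd (fun z => u (x', z))]
      _ = U x * U x' := by rw [← Finset.sum_mul]
  have expand : ∑ m : F, ∑ c : F, (∑ x : F, u (x, m * x + c)) ^ 2
      = ∑ x : F, ∑ x' : F, ∑ m : F, ∑ c : F, u (x, m * x + c) * u (x', m * x' + c) := by
    have h1 : ∀ m c : F, (∑ x : F, u (x, m * x + c)) ^ 2
        = ∑ x : F, ∑ x' : F, u (x, m * x + c) * u (x', m * x' + c) := by
      intro m c
      rw [sq, Finset.sum_mul_sum]
    calc ∑ m : F, ∑ c : F, (∑ x : F, u (x, m * x + c)) ^ 2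
        = ∑ m : F, ∑ c : F, ∑ x : F, ∑ x' : F, u (x, m * x + c) * u (x', m * x' + c) :=
          Finset.sum_congr rfl (fun m _ => Finset.sum_congr rfl (fun c _ => h1 m c))
      _ = ∑ m : F, ∑ x : F, ∑ c : F, ∑ x' : F, u (x, m * x + c) * u (x', m * x' + c) :=
          Finset.sum_congr rfl (fun m _ => Finset.sum_comm)
      _ = ∑ x : F, ∑ m : F, ∑ c : F, ∑ x' : F, u (x, m * x + c) * u (x', m * x' + c) :=
          Finset.sum_comm
      _ = ∑ x : F, ∑ m : F, ∑ x' : F, ∑ c : F, u (x, m * x + c) * u (x', m * x' + c) :=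
          Finset.sum_congr rfl (fun x _ => Finset.sum_congr rfl (fun m _ => Finset.sum_comm))
      _ = ∑ x : F, ∑ x' : F, ∑ m : F, ∑ c : F, u (x, m * x + c) * u (x', m * x' + c) :=
          Finset.sum_congr rfl (fun x _ => Finset.sum_comm)
  rw [expand]
  have hrow : ∀ x : F, ∑ x' : F, ∑ m : F, ∑ c : F, u (x, m * x + c) * u (x', m * x' + c)
      = (Fintype.card F : ℝ) * V x - (U x) ^ 2 := by
    intro x
    rw [← Finset.add_sum_erase _ _ (Finset.mem_univ x)]
    have h2 : ∑ x' ∈ Finset.univ.erase x, ∑ m : F, ∑ c : F,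
        u (x, m * x + c) * u (x', m * x' + c)
        = ∑ x' ∈ Finset.univ.erase x, U x * U x' :=
      Finset.sum_congr rfl (fun x' hx' => hoff x x' (Ne.symm (Finset.mem_erase.mp hx').1))
    rw [h2, hdiag x, ← Finset.mul_sum]
    have h3 : ∑ x' ∈ Finset.univ.erase x, U x' = - U x := by
      have h4 := Finset.add_sum_erase Finset.univ U (Finset.mem_univ x)
      rw [hUsum] at h4
      linarith
    rw [h3]; ring
  rw [Finset.sum_congr rfl (fun x _ => hrow x), Finset.sum_sub_distrib, ← Finset.mul_sum, hVsum]
  have h5 : 0 ≤ ∑ x : F, (U x) ^ 2 := Finset.sum_nonneg (fun x _ => sq_nonneg _)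
  linarith

private lemma master_ineq (F : Type) [Field F] [Fintype F] [DecidableEq F] (A : Finset F) :
    ((A.erase 0).card : ℝ) * A.card * A.card ≤
      ((A.erase 0).card : ℝ) * A.card * (((A + A).card : ℝ) * ((A * A).card : ℝ))
        / (Fintype.card F : ℝ)
      + Real.sqrt (((A.erase 0).card : ℝ) * A.card * (Fintype.card F : ℝ)
          * (((A + A).card : ℝ) * ((A * A).card : ℝ))) := by
  classical
  have hq0 : (0:ℝ) < (Fintype.card F : ℝ) := by exact_mod_cast Fintype.card_pos
  set q : ℝ := (Fintype.card F : ℝ) with hqdef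
  set S : Finset F := A + A with hS
  set D : Finset F := A * A with hD
  set P : Finset (F × F) := S ×ˢ D with hP
  set α : ℝ := (P.card : ℝ) / q ^ 2 with hα
  have hα0 : 0 ≤ α := by positivity
  set u : F × F → ℝ := fun p => (if p ∈ P then (1:ℝ) else 0) - α with hu
  set gl : F → F → ℝ := fun m c => ∑ x : F, u (x, m * x + c) with hgl
  have hcardFF : ((Finset.univ : Finset (F × F)).card : ℝ) = q ^ 2 := by
    rw [card_univ, Fintype.card_prod]; push_cast [hqdef]; ring
  have hind : ∑ p : F × F, (if p ∈ P then (1:ℝ) else 0) = P.card := by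
    rw [Finset.sum_ite_mem, Finset.univ_inter, Finset.sum_const, nsmul_eq_mul, mul_one]
  have husum : ∑ p : F × F, u p = 0 := by
    rw [hu]
    rw [Finset.sum_sub_distrib, hind, Finset.sum_const, nsmul_eq_mul, hcardFF, hα]
    field_simp
    ring
  have husq : ∑ p : F × F, (u p) ^ 2 ≤ P.card := by
    have hexp : ∀ p : F × F, (u p) ^ 2
        = (if p ∈ P then (1:ℝ) else 0) - 2 * α * (if p ∈ P then (1:ℝ) else 0) + α ^ 2 := by
      intro p
      by_cases h : p ∈ P <;> simp [hu, h] <;> ring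
    rw [Finset.sum_congr rfl (fun p _ => hexp p), Finset.sum_add_distrib,
      Finset.sum_sub_distrib, ← Finset.mul_sum, hind, Finset.sum_const, nsmul_eq_mul, hcardFF]
    have h1 : q ^ 2 * α ^ 2 = α * P.card := by
      rw [hα]; field_simp
    rw [h1]
    nlinarith [mul_nonneg hα0 (Nat.cast_nonneg P.card)]
  -- each counting sum over a line equals gl + q * α
  have hn : ∀ m c : F, ∑ x : F, (if (x, m * x + c) ∈ P then (1:ℝ) else 0)
      = gl m c + q * α := by
    intro m c
    have : ∀ x : F, (if (x, m * x + c) ∈ P then (1:ℝ) else 0) = u (x, m * x + c) + α := by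
      intro x; rw [hu]; ring
    rw [Finset.sum_congr rfl (fun x _ => this x), Finset.sum_add_distrib, Finset.sum_const,
      nsmul_eq_mul, card_univ, hgl, hqdef]
  -- incidence lower bound per line
  have hline : ∀ p ∈ (A.erase 0) ×ˢ A,
      (A.card : ℝ) ≤ gl p.1 (-(p.1 * p.2)) + q * α := by
    rintro ⟨a, b⟩ hab
    rw [Finset.mem_product] at hab
    obtain ⟨ha, hb⟩ := hab
    rw [← hn]
    have h4 : ∀ c' ∈ A, (if ((b + c', a * (b + c') + (-(a * b))) : F × F) ∈ P then (1:ℝ) else 0)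
        = 1 := by
      intro c' hc'
      have hy : a * (b + c') + (-(a * b)) = a * c' := by ring
      rw [hy, if_pos]
      rw [hP, Finset.mem_product]
      exact ⟨Finset.add_mem_add hb hc', Finset.mul_mem_mul (Finset.mem_of_mem_erase ha) hc'⟩
    calc (A.card : ℝ) = ∑ _c' ∈ A, (1:ℝ) := by rw [Finset.sum_const, nsmul_eq_mul, mul_one]
      _ = ∑ c' ∈ A, (if ((b + c', a * (b + c') + (-(a * b))) : F × F) ∈ P then (1:ℝ) else 0) :=
          (Finset.sum_congr rfl h4).symm
      _ = ∑ x ∈ A.image (fun c' => b + c'),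
            (if (x, a * x + (-(a * b))) ∈ P then (1:ℝ) else 0) := by
          rw [Finset.sum_image (fun x _ y _ h => add_left_cancel h)]
      _ ≤ ∑ x : F, (if (x, a * x + (-(a * b))) ∈ P then (1:ℝ) else 0) := by
          apply Finset.sum_le_sum_of_subset_of_nonneg (Finset.subset_univ _)
          intro x _ _
          positivity
  -- total incidence bounds
  set k' : ℝ := ((A.erase 0).card : ℝ) with hk'
  set k : ℝ := (A.card : ℝ) with hk
  have hcardprod : (((A.erase 0) ×ˢ A).card : ℝ) = k' * k := by
    rw [Finset.card_product]; push_cast; rfl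
  have hlower : k' * k * k ≤ ∑ p ∈ (A.erase 0) ×ˢ A, (gl p.1 (-(p.1 * p.2)) + q * α) := by
    calc k' * k * k = (((A.erase 0) ×ˢ A).card : ℝ) * k := by rw [hcardprod]
      _ = ∑ _p ∈ (A.erase 0) ×ˢ A, k := by rw [Finset.sum_const, nsmul_eq_mul]
      _ ≤ _ := Finset.sum_le_sum hline
  -- Cauchy-Schwarz and line lemma for the fluctuation part
  have hG : ∑ p ∈ (A.erase 0) ×ˢ A, gl p.1 (-(p.1 * p.2))
      ≤ Real.sqrt (k' * k * (q * P.card)) := by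
    have hcs : (∑ p ∈ (A.erase 0) ×ˢ A, gl p.1 (-(p.1 * p.2))) ^ 2
        ≤ (((A.erase 0) ×ˢ A).card : ℝ) * ∑ p ∈ (A.erase 0) ×ˢ A, (gl p.1 (-(p.1 * p.2))) ^ 2 := by
      have := Finset.sum_mul_sq_le_sq_mul_sq ((A.erase 0) ×ˢ A)
        (fun _ => (1:ℝ)) (fun p => gl p.1 (-(p.1 * p.2)))
      simpa [Finset.sum_const, nsmul_eq_mul] using this
    have himg : ∑ p ∈ (A.erase 0) ×ˢ A, (gl p.1 (-(p.1 * p.2))) ^ 2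
        ≤ ∑ mc : F × F, (gl mc.1 mc.2) ^ 2 := by
      have hinj : ∀ p ∈ (A.erase 0) ×ˢ A, ∀ p' ∈ (A.erase 0) ×ˢ A,
          (fun r : F × F => (r.1, -(r.1 * r.2))) p = (fun r : F × F => (r.1, -(r.1 * r.2))) p'
          → p = p' := by
        rintro ⟨a, b⟩ hab ⟨a', b'⟩ hab' h
        simp only [Prod.mk.injEq] at h
        obtain ⟨h1, h2⟩ := h
        subst h1
        rw [Finset.mem_product] at hab
        have ha0 : a ≠ 0 := (Finset.mem_erase.mp hab.1).1
        have : b = b' := by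
          have := neg_injective h2
          exact mul_left_cancel₀ ha0 this
        rw [this]
      calc ∑ p ∈ (A.erase 0) ×ˢ A, (gl p.1 (-(p.1 * p.2))) ^ 2
          = ∑ mc ∈ ((A.erase 0) ×ˢ A).image (fun r : F × F => (r.1, -(r.1 * r.2))),
              (gl mc.1 mc.2) ^ 2 :=
            (Finset.sum_image (f := fun mc : F × F => (gl mc.1 mc.2) ^ 2) (g := fun r : F × F => (r.1, -(r.1 * r.2))) hinj).symm
        _ ≤ ∑ mc : F × F, (gl mc.1 mc.2) ^ 2 := by
            apply Finset.sum_le_sum_of_subset_of_nonneg (Finset.subset_univ _)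
            intro x _ _
            positivity
    have hlines : ∑ mc : F × F, (gl mc.1 mc.2) ^ 2 ≤ q * P.card := by
      have h5 : ∑ mc : F × F, (gl mc.1 mc.2) ^ 2 = ∑ m : F, ∑ c : F, (gl m c) ^ 2 :=
        Fintype.sum_prod_type (f := fun mc : F × F => (gl mc.1 mc.2) ^ 2)
      rw [h5]
      calc ∑ m : F, ∑ c : F, (gl m c) ^ 2 ≤ q * ∑ p : F × F, (u p) ^ 2 :=
            line_sum_sq_le F u husum
        _ ≤ q * P.card := by
            apply mul_le_mul_of_nonneg_left husq (le_of_lt hq0)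
    have hbound : (∑ p ∈ (A.erase 0) ×ˢ A, gl p.1 (-(p.1 * p.2))) ^ 2 ≤ k' * k * (q * P.card) := by
      calc (∑ p ∈ (A.erase 0) ×ˢ A, gl p.1 (-(p.1 * p.2))) ^ 2
          ≤ (((A.erase 0) ×ˢ A).card : ℝ) * ∑ p ∈ (A.erase 0) ×ˢ A, (gl p.1 (-(p.1 * p.2))) ^ 2 :=
            hcs
        _ ≤ k' * k * (q * P.card) := by
            rw [hcardprod]
            apply mul_le_mul_of_nonneg_left (le_trans himg hlines)
            rw [hk', hk]
            exact mul_nonneg (Nat.cast_nonneg _) (Nat.cast_nonneg _)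
    calc ∑ p ∈ (A.erase 0) ×ˢ A, gl p.1 (-(p.1 * p.2))
        ≤ |∑ p ∈ (A.erase 0) ×ˢ A, gl p.1 (-(p.1 * p.2))| := le_abs_self _
      _ = Real.sqrt ((∑ p ∈ (A.erase 0) ×ˢ A, gl p.1 (-(p.1 * p.2))) ^ 2) :=
          (Real.sqrt_sq_eq_abs _).symm
      _ ≤ Real.sqrt (k' * k * (q * P.card)) := Real.sqrt_le_sqrt hbound
  -- assemble
  have hPcard : (P.card : ℝ) = (S.card : ℝ) * (D.card : ℝ) := by
    rw [hP, Finset.card_product]; push_cast; rfl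
  have hsplit : ∑ p ∈ (A.erase 0) ×ˢ A, (gl p.1 (-(p.1 * p.2)) + q * α)
      = (∑ p ∈ (A.erase 0) ×ˢ A, gl p.1 (-(p.1 * p.2))) + k' * k * (q * α) := by
    rw [Finset.sum_add_distrib, Finset.sum_const, nsmul_eq_mul, hcardprod]
  have hqα : q * α = (P.card : ℝ) / q := by
    rw [hα]; field_simp
  have := hlower
  rw [hsplit] at this
  have hfinal : k' * k * k ≤ Real.sqrt (k' * k * (q * P.card)) + k' * k * ((P.card : ℝ) / q) := by
    rw [← hqα]
    linarith [hG]
  rw [hPcard] at hfinal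
  calc k' * k * k ≤ Real.sqrt (k' * k * (q * ((S.card : ℝ) * D.card)))
        + k' * k * ((S.card : ℝ) * (D.card : ℝ) / q) := hfinal
    _ = k' * k * ((S.card : ℝ) * (D.card : ℝ)) / q
        + Real.sqrt (k' * k * q * ((S.card : ℝ) * (D.card : ℝ))) := by
        rw [add_comm]
        congr 1
        · ring
        · congr 1
          ring


theorem small_sumset_large_product (c₁ c₂ C : ℝ) (hc₁ : 0 < c₁) (hc₂ : 0 < c₂) (hC : 0 < C) :
    ∃ c : ℝ, 0 < c ∧ ∀ (F : Type) [Field F] [Fintype F] [DecidableEq F] (A : Finset F),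
      c₁ * (Fintype.card F : ℝ) ^ ((3 : ℝ) / 4) ≤ A.card →
      (A.card : ℝ) ≤ c₂ * (Fintype.card F : ℝ) ^ ((3 : ℝ) / 4) →
      ((A + A).card : ℝ) ≤ C * A.card →
      c * (Fintype.card F : ℝ) ≤ ((A * A).card : ℝ) := by
  classical
  set Q₀ : ℝ := max ((2 / c₁) ^ ((4:ℝ)/3)) ((1 / c₁) ^ (12:ℕ)) with hQ₀
  have hQ₀pos : 0 < Q₀ :=
    lt_of_lt_of_le (Real.rpow_pos_of_pos (by positivity) _) (le_max_left _ _)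
  refine ⟨min (1 / (4 * C)) (1 / Q₀), by positivity, ?_⟩
  intro F _ _ _ A h1 h2 h3
  have hq0 : (0:ℝ) < (Fintype.card F : ℝ) := by exact_mod_cast Fintype.card_pos
  set q : ℝ := (Fintype.card F : ℝ) with hqdef
  have hq34pos : (0:ℝ) < q ^ ((3:ℝ)/4) := Real.rpow_pos_of_pos hq0 _
  have hA0 : (0:ℝ) < (A.card : ℝ) := lt_of_lt_of_le (by positivity) h1
  have hAne : A.Nonempty := Finset.card_pos.mp (by exact_mod_cast hA0)
  have hD1 : (1:ℝ) ≤ ((A * A).card : ℝ) := by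
    have : (A * A).Nonempty := hAne.mul hAne
    exact_mod_cast Finset.card_pos.mpr this
  have hd0 : (0:ℝ) ≤ ((A * A).card : ℝ) := by linarith
  by_cases hcase : q ≤ Q₀
  · -- small field: trivial bound
    calc min (1 / (4 * C)) (1 / Q₀) * q ≤ (1 / Q₀) * q := by
          apply mul_le_mul_of_nonneg_right (min_le_right _ _) (le_of_lt hq0)
      _ ≤ (1 / Q₀) * Q₀ := by
          apply mul_le_mul_of_nonneg_left hcase (by positivity)
      _ = 1 := by field_simp
      _ ≤ ((A * A).card : ℝ) := hD1
  · push_neg at hcase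
    -- large field
    have hqQ : Q₀ ≤ q := le_of_lt hcase
    -- k ≥ 2
    have hk2 : (2:ℝ) ≤ (A.card : ℝ) := by
      have hb : (0:ℝ) ≤ 2 / c₁ := by positivity
      have e1 : ((2 / c₁) ^ ((4:ℝ)/3)) ^ ((3:ℝ)/4) = 2 / c₁ := by
        rw [← Real.rpow_mul hb]
        norm_num
      have m1 : (2 / c₁) ^ ((4:ℝ)/3) ≤ q := le_trans (le_max_left _ _) hqQ
      have m2 : ((2 / c₁) ^ ((4:ℝ)/3)) ^ ((3:ℝ)/4) ≤ q ^ ((3:ℝ)/4) :=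
        Real.rpow_le_rpow (Real.rpow_nonneg hb _) m1 (by norm_num)
      rw [e1] at m2
      have : c₁ * (2 / c₁) ≤ c₁ * q ^ ((3:ℝ)/4) :=
        mul_le_mul_of_nonneg_left m2 (le_of_lt hc₁)
      have h2c : c₁ * (2 / c₁) = 2 := by field_simp
      linarith
    -- q^2 ≤ k^3
    have hk3 : q ^ 2 ≤ (A.card : ℝ) ^ 3 := by
      have hb : (0:ℝ) ≤ 1 / c₁ := by positivity
      have m1 : (1 / c₁) ^ (12:ℕ) ≤ q := le_trans (le_max_right _ _) hqQ
      have e1 : (((1 / c₁) ^ (12:ℕ) : ℝ)) ^ ((1:ℝ)/4) = (1 / c₁) ^ (3:ℕ) := by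
        have : ((1 / c₁) ^ (12:ℕ) : ℝ) = ((1 / c₁) ^ (3:ℕ)) ^ (4:ℕ) := by ring
        rw [this, ← Real.rpow_natCast (((1 / c₁) ^ (3:ℕ))) 4, ← Real.rpow_mul (by positivity)]
        norm_num
      have m2 : (1 / c₁) ^ (3:ℕ) ≤ q ^ ((1:ℝ)/4) := by
        rw [← e1]
        exact Real.rpow_le_rpow (by positivity) m1 (by norm_num)
      have hkcube : (c₁ * q ^ ((3:ℝ)/4)) ^ 3 ≤ (A.card : ℝ) ^ 3 := by
        apply pow_le_pow_left₀ (by positivity) h1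
      have e2 : (c₁ * q ^ ((3:ℝ)/4)) ^ 3 = c₁ ^ 3 * q ^ ((9:ℝ)/4) := by
        rw [mul_pow, ← Real.rpow_natCast (q ^ ((3:ℝ)/4)) 3, ← Real.rpow_mul (le_of_lt hq0)]
        norm_num
      have e3 : q ^ ((9:ℝ)/4) = q ^ 2 * q ^ ((1:ℝ)/4) := by
        rw [← Real.rpow_natCast q 2, ← Real.rpow_add hq0]
        norm_num
      have m3 : q ^ 2 * 1 ≤ q ^ 2 * (c₁ ^ 3 * q ^ ((1:ℝ)/4)) := by
        apply mul_le_mul_of_nonneg_left _ (by positivity)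
        have : c₁ ^ 3 * ((1 / c₁) ^ (3:ℕ)) = 1 := by field_simp
        calc (1:ℝ) = c₁ ^ 3 * ((1 / c₁) ^ (3:ℕ)) := this.symm
          _ ≤ c₁ ^ 3 * q ^ ((1:ℝ)/4) := mul_le_mul_of_nonneg_left m2 (by positivity)
      calc q ^ 2 = q ^ 2 * 1 := (mul_one _).symm
        _ ≤ q ^ 2 * (c₁ ^ 3 * q ^ ((1:ℝ)/4)) := m3
        _ = c₁ ^ 3 * q ^ ((9:ℝ)/4) := by rw [e3]; ring
        _ = (c₁ * q ^ ((3:ℝ)/4)) ^ 3 := e2.symm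
        _ ≤ (A.card : ℝ) ^ 3 := hkcube
    -- k' bounds
    have hk'nat : A.card ≤ (A.erase 0).card + 1 := by
      calc A.card ≤ (insert (0:F) (A.erase 0)).card :=
            Finset.card_le_card (Finset.subset_insert_iff.mpr (Finset.Subset.refl _))
        _ ≤ (A.erase 0).card + 1 := Finset.card_insert_le _ _
    have hk'1 : (A.card : ℝ) ≤ ((A.erase 0).card : ℝ) + 1 := by exact_mod_cast hk'nat
    have hk'half : (A.card : ℝ) ≤ 2 * ((A.erase 0).card : ℝ) := by linarith
    have hk'pos : (0:ℝ) < ((A.erase 0).card : ℝ) := by linarith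
    -- main contradiction
    set k : ℝ := (A.card : ℝ) with hk
    set k' : ℝ := ((A.erase 0).card : ℝ) with hk'
    set s : ℝ := ((A + A).card : ℝ) with hs
    set d : ℝ := ((A * A).card : ℝ) with hd
    have hs0 : (0:ℝ) ≤ s := Nat.cast_nonneg _
    have key : q / (4 * C) ≤ d := by
      by_contra hcon
      push_neg at hcon
      have master := master_ineq F A
      rw [← hqdef, ← hk, ← hk', ← hs, ← hd] at master
      have hsd : s * d ≤ k * q / 4 := by
        calc s * d ≤ (C * k) * (q / (4 * C)) :=
              mul_le_mul h3 (le_of_lt hcon) hd0 (by positivity)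
          _ = k * q / 4 := by field_simp
      have hT1 : k' * k * (s * d) / q ≤ k' * k * k / 4 := by
        have h5 : k' * k * (s * d) ≤ k' * k * (k * q / 4) :=
          mul_le_mul_of_nonneg_left hsd (by positivity)
        rw [div_le_iff₀ hq0]
        calc k' * k * (s * d) ≤ k' * k * (k * q / 4) := h5
          _ = k' * k * k / 4 * q := by ring
      have hX : (3/4) * (k' * k * k) ≤ Real.sqrt (k' * k * q * (s * d)) := by linarith
      have hY0 : (0:ℝ) ≤ k' * k * q * (s * d) := by positivity
      have hX2 : ((3/4) * (k' * k * k)) ^ 2 ≤ k' * k * q * (s * d) := by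
        have h6 := mul_self_le_mul_self (by positivity) hX
        rw [Real.mul_self_sqrt hY0] at h6
        calc ((3/4) * (k' * k * k)) ^ 2 = ((3/4) * (k' * k * k)) * ((3/4) * (k' * k * k)) := sq _
          _ ≤ k' * k * q * (s * d) := h6
      have hY2 : k' * k * q * (s * d) ≤ (C * q * d) * (k' * k * k) := by
        have h7 : s * d ≤ (C * k) * d := mul_le_mul_of_nonneg_right h3 hd0
        calc k' * k * q * (s * d) ≤ k' * k * q * ((C * k) * d) := by
              apply mul_le_mul_of_nonneg_left h7 (by positivity)
          _ = (C * q * d) * (k' * k * k) := by ring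
      have hZpos : (0:ℝ) < k' * k * k := by positivity
      have h8 : (9/16) * (k' * k * k) ≤ C * q * d := by
        have h9 : ((9/16) * (k' * k * k)) * (k' * k * k) ≤ (C * q * d) * (k' * k * k) := by
          nlinarith [hX2, hY2]
        exact le_of_mul_le_mul_right h9 hZpos
      have h10 : (9/32) * (k * k * k) ≤ C * q * d := by nlinarith [h8, hk'half, hk2, hk'pos]
      have h11 : (9/32) * q ^ 2 ≤ C * q * d := by nlinarith [h10, hk3]
      have h12 : (9/32) * q ≤ C * d := by nlinarith [h11, hq0]
      -- but d < q/(4C) gives C*d < q/4 = (8/32) q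
      have h13 : C * d < q / 4 := by
        calc C * d < C * (q / (4 * C)) := by
              apply mul_lt_mul_of_pos_left hcon hC
          _ = q / 4 := by field_simp
      linarith
    calc min (1 / (4 * C)) (1 / Q₀) * q ≤ (1 / (4 * C)) * q := by
          apply mul_le_mul_of_nonneg_right (min_le_left _ _) (le_of_lt hq0)
      _ = q / (4 * C) := by ring
      _ ≤ d := key
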